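/- Let γ = [0; b_1, b_2, ...] be irrational but not a quadratic irrationality, with partial quotients in {1,2,3,4}. Let n_1 < n_2 be indices with n_1 ≡ n_2 (mod 2) and b_{n_1+i} = b_{n_2+i} for 0 ≤ i ≤ 2n+1. Define γ¹ = [0; b_1,...,b_{n_1−1}, b_{n_2}, b_{n_2+1}, ...] (deleting the block b_{n_1},...,b_{n_2−1}) and γ² = [0; b_1,...,b_{n_2−1}, b_{n_1},...,b_{n_2−1}, b_{n_2}, ...] (doubling that block). Then max(γ¹, γ²) > γ. -/

import Mathlib

open Filter

/-- Numerators of the convergents of the continued fraction `[a 0; a 1, a 2, ...]`. -/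
def cfNum (a : ℕ → ℤ) : ℕ → ℤ
  | 0 => a 0
  | 1 => a 1 * a 0 + 1
  | n + 2 => a (n + 2) * cfNum a (n + 1) + cfNum a n

/-- Denominators of the convergents of the continued fraction `[a 0; a 1, a 2, ...]`. -/
def cfDen (a : ℕ → ℤ) : ℕ → ℤ
  | 0 => 1
  | 1 => a 1
  | n + 2 => a (n + 2) * cfDen a (n + 1) + cfDen a n

/-- Value of the infinite continued fraction `[a 0; a 1, a 2, ...]`, as the limit of
its convergents. -/
noncomputable def cfVal (a : ℕ → ℤ) : ℝ :=
  limUnder atTop fun n => (cfNum a n : ℝ) / (cfDen a n : ℝ)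

/-- Value of the infinite continued fraction `[0; s 0, s 1, s 2, ...]`. -/
noncomputable def cfZero (s : ℕ → ℤ) : ℝ :=
  cfVal fun n => if n = 0 then 0 else s (n - 1)

/-- Value of the finite continued fraction `[0; l]`. -/
noncomputable def cfFin : List ℤ → ℝ
  | [] => 0
  | x :: xs => 1 / ((x : ℝ) + cfFin xs)

/-- `λ_i(α) = [a_i; a_{i+1}, ...] + [0; a_{i-1}, ..., a_1]` for `α = [a 0; a 1, a 2, ...]`. -/
noncomputable def lambdaCF (a : ℕ → ℤ) (i : ℕ) : ℝ :=
  cfVal (fun n => a (i + n)) + cfFin ((List.range (i - 1)).map fun j => a (i - 1 - j))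

/-- `λ_i(B) = [b_i; b_{i-1}, ...] + [0; b_{i+1}, ...]` for a doubly infinite sequence. -/
noncomputable def lambdaZ (b : ℤ → ℤ) (i : ℤ) : ℝ :=
  cfVal (fun n => b (i - n)) + cfVal fun n => if n = 0 then 0 else b (i + n)

/-- `M(B) = sup_i λ_i(B)`. -/
noncomputable def MZ (b : ℤ → ℤ) : ℝ := ⨆ i : ℤ, lambdaZ b i

/-- The Lagrange constant `μ(α)`, defined by
`μ(α)⁻¹ = liminf_{p ∈ ℤ, q ∈ ℕ} |q (q α - p)|`. -/
noncomputable def lagrangeConst (α : ℝ) : ℝ :=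
  (liminf (fun q : ℕ => ⨅ p : ℤ, |(q : ℝ) * ((q : ℝ) * α - (p : ℝ))|) atTop)⁻¹

/-- `α` is attainable: `|α - p/q| ≤ 1/(μ(α) q²)` has infinitely many integer solutions. -/
def Attainable (α : ℝ) : Prop :=
  {pq : ℤ × ℤ | 0 < pq.2 ∧
    |α - (pq.1 : ℝ) / (pq.2 : ℝ)| ≤ 1 / (lagrangeConst α * (pq.2 : ℝ) ^ 2)}.Infinite

/-- The Lagrange spectrum: the set of values of `μ(α)` over irrational `α`. -/
def LagrangeSpectrum : Set ℝ := {x | ∃ α : ℝ, Irrational α ∧ lagrangeConst α = x}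

/-- The doubly infinite sequence `b` is weakly associated with the number whose partial
quotients are `a 1, a 2, ...`: every central pattern `(b_{-i}, ..., b_i)` occurs
infinitely often in `(a 1, a 2, ...)`. -/
def WeaklyAssoc (b : ℤ → ℤ) (a : ℕ → ℤ) : Prop :=
  ∀ i : ℕ, ∃ᶠ k in atTop, ∀ j : ℕ, j ≤ 2 * i → a (k + 1 + j) = b ((j : ℤ) - (i : ℤ))

namespace S14

open Topology

lemma one_le_cfDen (s : ℕ → ℤ) (h1 : ∀ k, 1 ≤ k → 1 ≤ s k) : ∀ n, 1 ≤ cfDen s n := by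
  have key : ∀ n, 1 ≤ cfDen s n ∧ 1 ≤ cfDen s (n + 1) := by
    intro n
    induction n with
    | zero => exact ⟨le_refl 1, by simpa [cfDen] using h1 1 le_rfl⟩
    | succ k ih =>
      refine ⟨ih.2, ?_⟩
      show 1 ≤ s (k+2) * cfDen s (k+1) + cfDen s k
      nlinarith [h1 (k+2) (by omega), ih.1, ih.2]
  exact fun n => (key n).1

lemma one_le_cfNum (s : ℕ → ℤ) (h0 : 1 ≤ s 0) (h1 : ∀ k, 1 ≤ k → 1 ≤ s k) :
    ∀ n, 1 ≤ cfNum s n := by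
  have key : ∀ n, 1 ≤ cfNum s n ∧ 1 ≤ cfNum s (n + 1) := by
    intro n
    induction n with
    | zero =>
      constructor
      · simpa [cfNum] using h0
      · show 1 ≤ s 1 * s 0 + 1
        nlinarith [h1 1 le_rfl]
    | succ k ih =>
      refine ⟨ih.2, ?_⟩
      show 1 ≤ s (k+2) * cfNum s (k+1) + cfNum s k
      nlinarith [h1 (k+2) (by omega), ih.1, ih.2]
  exact fun n => (key n).1

lemma nat_le_cfDen (s : ℕ → ℤ) (h1 : ∀ k, 1 ≤ k → 1 ≤ s k) : ∀ n : ℕ, (n : ℤ) ≤ cfDen s n := by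
  have key : ∀ n : ℕ, (n : ℤ) ≤ cfDen s n ∧ ((n:ℤ)+1) ≤ cfDen s (n + 1) := by
    intro n
    induction n with
    | zero => exact ⟨by simp [cfDen], by simpa [cfDen] using h1 1 le_rfl⟩
    | succ k ih =>
      refine ⟨by push_cast; exact ih.2, ?_⟩
      show ((k:ℤ)+1+1) ≤ s (k+2) * cfDen s (k+1) + cfDen s k
      have := one_le_cfDen s h1 k
      nlinarith [h1 (k+2) (by omega), ih.2]
  exact fun n => (key n).1

lemma cfDen_lt (s : ℕ → ℤ) (h1 : ∀ k, 1 ≤ k → 1 ≤ s k) (n : ℕ) :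
    cfDen s n < cfDen s (n + 2) := by
  show cfDen s n < s (n+2) * cfDen s (n+1) + cfDen s n
  nlinarith [h1 (n+2) (by omega), one_le_cfDen s h1 (n+1)]

lemma det_eq (s : ℕ → ℤ) : ∀ n,
    cfNum s (n+1) * cfDen s n - cfNum s n * cfDen s (n+1) = (-1)^n := by
  intro n
  induction n with
  | zero => simp [cfNum, cfDen]; ring
  | succ k ih =>
    show (s (k+2) * cfNum s (k+1) + cfNum s k) * cfDen s (k+1)
        - cfNum s (k+1) * (s (k+2) * cfDen s (k+1) + cfDen s k) = (-1)^(k+1)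
    linear_combination (-1 : ℤ) * ih

noncomputable def xc (s : ℕ → ℤ) (n : ℕ) : ℝ := (cfNum s n : ℝ) / (cfDen s n : ℝ)

lemma denR_pos (s : ℕ → ℤ) (h1 : ∀ k, 1 ≤ k → 1 ≤ s k) (n : ℕ) : (0:ℝ) < (cfDen s n : ℝ) := by
  exact_mod_cast lt_of_lt_of_le one_pos (by exact_mod_cast one_le_cfDen s h1 n)

lemma xc_sub (s : ℕ → ℤ) (h1 : ∀ k, 1 ≤ k → 1 ≤ s k) (n : ℕ) :
    xc s (n+1) - xc s n = (-1)^n / ((cfDen s n : ℝ) * (cfDen s (n+1) : ℝ)) := by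
  have q1 := (denR_pos s h1 n).ne'
  have q2 := (denR_pos s h1 (n+1)).ne'
  have key : (cfNum s (n+1):ℝ) * (cfDen s n : ℝ) - (cfNum s n : ℝ) * (cfDen s (n+1) : ℝ)
      = (-1)^n := by exact_mod_cast det_eq s n
  rw [xc, xc, div_sub_div _ _ q2 q1, div_eq_div_iff (mul_ne_zero q2 q1) (mul_ne_zero q1 q2)]
  linear_combination ((cfDen s n : ℝ) * (cfDen s (n+1) : ℝ)) * key

lemma summable_d (s : ℕ → ℤ) (h1 : ∀ k, 1 ≤ k → 1 ≤ s k) :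
    Summable (fun n => xc s (n+1) - xc s n) := by
  apply Summable.of_abs
  have h1s : Summable (fun n : ℕ => 1 / ((n:ℝ)+1)^2) := by
    have := (summable_nat_add_iff 1).mpr (Real.summable_one_div_nat_pow.mpr one_lt_two)
    simpa using this
  have hcomp : Summable (fun n : ℕ => 2 / ((n:ℝ)+1)^2) := by
    have := h1s.mul_left 2
    exact this.congr (fun n => by ring)
  apply Summable.of_nonneg_of_le (fun n => abs_nonneg _) _ hcomp
  intro n
  rw [xc_sub s h1 n, abs_div, abs_pow, abs_neg, abs_one, one_pow]
  have q1 := denR_pos s h1 n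
  have q2 := denR_pos s h1 (n+1)
  rw [abs_of_pos (by positivity), div_le_div_iff₀ (by positivity) (by positivity)]
  have hn1 : (n:ℝ) ≤ (cfDen s n : ℝ) := by exact_mod_cast nat_le_cfDen s h1 n
  have hn2 : ((n:ℝ)+1) ≤ (cfDen s (n+1) : ℝ) := by exact_mod_cast nat_le_cfDen s h1 (n+1)
  have hq1 : (1:ℝ) ≤ (cfDen s n : ℝ) := by exact_mod_cast one_le_cfDen s h1 n
  nlinarith [sq_nonneg ((n:ℝ) - 1)]

lemma tendsto_xc (s : ℕ → ℤ) (h1 : ∀ k, 1 ≤ k → 1 ≤ s k) :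
    Tendsto (xc s) atTop (𝓝 (cfVal s)) := by
  obtain ⟨S, hS⟩ := (summable_d s h1)
  have hps := hS.tendsto_sum_nat
  have hx : ∀ n, xc s n = xc s 0 + ∑ i ∈ Finset.range n, (xc s (i+1) - xc s i) := by
    intro n
    rw [Finset.sum_range_sub (fun i => xc s i)]
    ring
  have ht : Tendsto (xc s) atTop (𝓝 (xc s 0 + S)) :=
    (hps.const_add (xc s 0)).congr (fun n => (hx n).symm)
  have hlim : cfVal s = xc s 0 + S := Tendsto.limUnder_eq ht
  rw [hlim]; exact ht

lemma s0_lt_cfVal (s : ℕ → ℤ) (h1 : ∀ k, 1 ≤ k → 1 ≤ s k) : (s 0 : ℝ) < cfVal s := by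
  have dpair : ∀ m : ℕ, 0 < (xc s (2*m+1) - xc s (2*m)) + (xc s (2*m+2) - xc s (2*m+1)) := by
    intro m
    rw [xc_sub s h1, xc_sub s h1]
    have q0 := denR_pos s h1 (2*m)
    have q1 := denR_pos s h1 (2*m+1)
    have q2 := denR_pos s h1 (2*m+2)
    have hlt : (cfDen s (2*m) : ℝ) < (cfDen s (2*m+2) : ℝ) := by
      exact_mod_cast cfDen_lt s h1 (2*m)
    have e0 : ((-1:ℝ))^(2*m) = 1 := by
      rw [pow_mul]; norm_num
    have e1 : ((-1:ℝ))^(2*m+1) = -1 := by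
      rw [pow_succ, e0]; norm_num
    rw [e0, e1]
    rw [div_add_div _ _ (by positivity) (by positivity)]
    apply div_pos _ (by positivity)
    nlinarith
  have hmono : ∀ m : ℕ, xc s 2 ≤ xc s (2*(m+1)) := by
    intro m
    induction m with
    | zero => norm_num
    | succ k ih =>
      have he : 2*(k+1+1) = 2*(k+1)+2 := by ring
      rw [he]
      nlinarith [dpair (k+1)]
  have hsub : Tendsto (fun m : ℕ => xc s (2*(m+1))) atTop (𝓝 (cfVal s)) := by
    apply (tendsto_xc s h1).comp
    apply StrictMono.tendsto_atTop
    intro i j hij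
    dsimp only
    omega
  have h2 : xc s 2 ≤ cfVal s := ge_of_tendsto hsub (Eventually.of_forall hmono)
  have h02 : (s 0 : ℝ) < xc s 2 := by
    have hd := dpair 0
    have hx0 : xc s 0 = (s 0 : ℝ) := by
      rw [xc]; simp [cfNum, cfDen]
    simp only [Nat.mul_zero, Nat.zero_add] at hd
    nlinarith
  linarith


lemma shift_rel (s : ℕ → ℤ) : ∀ n,
    cfNum s (n+1) = s 0 * cfNum (fun k => s (k+1)) n + cfDen (fun k => s (k+1)) n ∧
    cfDen s (n+1) = cfNum (fun k => s (k+1)) n := by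
  have key : ∀ n,
      (cfNum s (n+1) = s 0 * cfNum (fun k => s (k+1)) n + cfDen (fun k => s (k+1)) n ∧
        cfDen s (n+1) = cfNum (fun k => s (k+1)) n) ∧
      (cfNum s (n+2) = s 0 * cfNum (fun k => s (k+1)) (n+1) + cfDen (fun k => s (k+1)) (n+1) ∧
        cfDen s (n+2) = cfNum (fun k => s (k+1)) (n+1)) := by
    intro n
    induction n with
    | zero =>
      refine ⟨⟨?_, ?_⟩, ?_, ?_⟩ <;> simp [cfNum, cfDen] <;> ring
    | succ k ih =>
      refine ⟨ih.2, ?_, ?_⟩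
      · show s (k+3) * cfNum s (k+2) + cfNum s (k+1)
            = s 0 * (s (k+3) * cfNum (fun k => s (k+1)) (k+1) + cfNum (fun k => s (k+1)) k)
              + (s (k+3) * cfDen (fun k => s (k+1)) (k+1) + cfDen (fun k => s (k+1)) k)
        linear_combination s (k+3) * ih.2.1 + ih.1.1
      · show s (k+3) * cfDen s (k+2) + cfDen s (k+1)
            = s (k+3) * cfNum (fun k => s (k+1)) (k+1) + cfNum (fun k => s (k+1)) k
        linear_combination s (k+3) * ih.2.2 + ih.1.2
  exact fun n => (key n).1

lemma one_lt_cfVal (s : ℕ → ℤ) (h0 : 1 ≤ s 0) (h1 : ∀ k, 1 ≤ k → 1 ≤ s k) :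
    (1:ℝ) ≤ cfVal s := by
  have := s0_lt_cfVal s h1
  have h0' : (1:ℝ) ≤ (s 0 : ℝ) := by exact_mod_cast h0
  linarith

lemma cfVal_rec (s : ℕ → ℤ) (h1 : ∀ k, 1 ≤ k → 1 ≤ s k) :
    cfVal s = (s 0 : ℝ) + 1 / cfVal (fun k => s (k+1)) := by
  set sh := fun k => s (k+1) with hsh
  have hsh1 : ∀ k, 1 ≤ k → 1 ≤ sh k := fun k _ => h1 (k+1) (by omega)
  have hsh0 : 1 ≤ sh 0 := h1 1 le_rfl
  have hshpos : (0:ℝ) < cfVal sh := lt_of_lt_of_le one_pos (one_lt_cfVal sh hsh0 hsh1)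
  have hpt : ∀ n, xc s (n+1) = (s 0 : ℝ) + 1 / xc sh n := by
    intro n
    have hrel := shift_rel s n
    have hN : (0:ℝ) < (cfNum sh n : ℝ) := by
      exact_mod_cast lt_of_lt_of_le one_pos
        (by exact_mod_cast one_le_cfNum sh hsh0 hsh1 n)
    have hD : (0:ℝ) < (cfDen sh n : ℝ) := denR_pos sh hsh1 n
    rw [xc, xc, hrel.1, hrel.2]
    push_cast
    field_simp
    exact mul_div_cancel_right₀ _ hN.ne'
  have hL : Tendsto (fun n => xc s (n+1)) atTop (𝓝 (cfVal s)) :=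
    (tendsto_xc s h1).comp (tendsto_add_atTop_nat 1)
  have hR : Tendsto (fun n => (s 0:ℝ) + 1 / xc sh n) atTop (𝓝 ((s 0:ℝ) + 1 / cfVal sh)) := by
    have h2 := ((tendsto_xc sh hsh1).inv₀ (ne_of_gt hshpos)).const_add ((s 0 : ℝ))
    simpa only [one_div] using h2
  exact tendsto_nhds_unique hL (hR.congr (fun n => (hpt n).symm))

lemma cmp : ∀ (m : ℕ) (u v : ℕ → ℤ), (∀ k, 1 ≤ k → 1 ≤ u k) → (∀ k, 1 ≤ k → 1 ≤ v k) →
    (∀ k, k < m → u k = v k) →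
    cfVal (fun n => u (m + n)) < cfVal (fun n => v (m + n)) →
    ((Even m → cfVal u < cfVal v) ∧ (¬ Even m → cfVal v < cfVal u)) := by
  intro m
  induction m with
  | zero =>
    intro u v hu hv hag h
    refine ⟨fun _ => ?_, fun h' => absurd Even.zero h'⟩
    simpa using h
  | succ m ih =>
    intro u v hu hv hag h
    have hsu : ∀ k, 1 ≤ k → 1 ≤ u (k+1) := fun k _ => hu (k+1) (by omega)
    have hsv : ∀ k, 1 ≤ k → 1 ≤ v (k+1) := fun k _ => hv (k+1) (by omega)
    have htu : (fun n => (fun k => u (k+1)) (m + n)) = (fun n => u (m + 1 + n)) := by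
      funext n; show u (m + n + 1) = u (m + 1 + n); congr 1; omega
    have htv : (fun n => (fun k => v (k+1)) (m + n)) = (fun n => v (m + 1 + n)) := by
      funext n; show v (m + n + 1) = v (m + 1 + n); congr 1; omega
    have hcomp := ih (fun k => u (k+1)) (fun k => v (k+1)) hsu hsv
      (fun k hk => hag (k+1) (by omega)) (by rw [htu, htv]; exact h)
    have hru := cfVal_rec u hu
    have hrv := cfVal_rec v hv
    have hpu : (1:ℝ) ≤ cfVal (fun k => u (k+1)) := one_lt_cfVal _ (hu 1 le_rfl) hsu
    have hpv : (1:ℝ) ≤ cfVal (fun k => v (k+1)) := one_lt_cfVal _ (hv 1 le_rfl) hsv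
    have h0 : u 0 = v 0 := hag 0 (by omega)
    constructor
    · intro hev
      have hodd : ¬ Even m := by
        rw [Nat.even_add_one] at hev; exact hev
      have hlt := hcomp.2 hodd
      have : 1 / cfVal (fun k => u (k+1)) < 1 / cfVal (fun k => v (k+1)) :=
        one_div_lt_one_div_of_lt (by linarith) hlt
      rw [hru, hrv, h0]
      linarith
    · intro hodd
      have hev : Even m := by
        rw [Nat.even_add_one, not_not] at hodd; exact hodd
      have hlt := hcomp.1 hev
      have : 1 / cfVal (fun k => v (k+1)) < 1 / cfVal (fun k => u (k+1)) :=
        one_div_lt_one_div_of_lt (by linarith) hlt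
      rw [hru, hrv, h0]
      linarith

lemma moebius (u : ℕ → ℤ) (h0 : 0 ≤ u 0) (h1 : ∀ k, 1 ≤ k → 1 ≤ u k) :
    ∀ m : ℕ, ∃ P P' Q Q' : ℤ,
      (P*Q' - P'*Q = 1 ∨ P*Q' - P'*Q = -1) ∧ 0 ≤ Q ∧ 0 ≤ Q' ∧
      (m = 0 → Q = 0 ∧ Q' = 1) ∧ (1 ≤ m → 1 ≤ Q) ∧
      0 < Q * cfVal (fun n => u (m+n)) + Q' ∧
      cfVal u * (Q * cfVal (fun n => u (m+n)) + Q')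
        = P * cfVal (fun n => u (m+n)) + P' := by
  intro m
  induction m with
  | zero =>
    refine ⟨1, 0, 0, 1, Or.inl (by ring), le_refl 0, zero_le_one,
      fun _ => ⟨rfl, rfl⟩, by omega, by norm_num, ?_⟩
    have he : (fun n => u (0+n)) = u := by funext n; rw [Nat.zero_add]
    rw [he]; push_cast; ring
  | succ m ih =>
    obtain ⟨P, P', Q, Q', hdet, hQ, hQ', h00, hQ1, hpos, heq⟩ := ih
    set T := cfVal (fun n => u (m+n)) with hT
    set T' := cfVal (fun n => u (m+1+n)) with hT'
    have hsh : ∀ k, 1 ≤ k → 1 ≤ u (m+k) := fun k hk => h1 (m+k) (by omega)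
    have hsh' : ∀ k, 1 ≤ k → 1 ≤ u (m+1+k) := fun k hk => h1 (m+1+k) (by omega)
    have hT'1 : (1:ℝ) ≤ T' := one_lt_cfVal _ (h1 (m+1) (by omega)) hsh'
    have hT'pos : (0:ℝ) < T' := lt_of_lt_of_le one_pos hT'1
    have hrec := cfVal_rec (fun n => u (m+n)) hsh
    have hshe : (fun k => (fun n => u (m+n)) (k+1)) = (fun n => u (m+1+n)) := by
      funext k; show u (m + (k+1)) = u (m+1+k); congr 1; omega
    rw [hshe] at hrec
    -- hrec : T = u (m+0) + 1 / T'
    have hm0 : (m : ℕ) + 0 = m := rfl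
    have hrec' : T = (u m : ℝ) + 1 / T' := by
      rw [hT, hT']
      simpa using hrec
    have hTT' : T * T' = (u m : ℝ) * T' + 1 := by
      rw [hrec']
      field_simp
    have hum : (0:ℤ) ≤ u m := by
      rcases Nat.eq_zero_or_pos m with h|h
      · rw [h]; exact h0
      · linarith [h1 m h]
    refine ⟨P * u m + P', P, Q * u m + Q', Q, ?_, by nlinarith, hQ,
      fun h => absurd h (Nat.succ_ne_zero m), ?_, ?_, ?_⟩
    · rcases hdet with h|h
      · right; linear_combination -h
      · left; linear_combination -h
    · intro _
      rcases Nat.eq_zero_or_pos m with h|h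
      · obtain ⟨hq0, hq1⟩ := h00 h
        rw [hq0, hq1]; simp
      · have := h1 m h
        nlinarith [hQ1 h]
    · have hden : ((Q * u m + Q' : ℤ) : ℝ) * T' + (Q:ℝ) = ((Q:ℝ) * T + Q') * T' := by
        push_cast
        linear_combination (-(Q:ℝ)) * hTT'
      push_cast
      push_cast at hden
      rw [hden]
      exact mul_pos hpos hT'pos
    · push_cast
      push_cast at heq
      linear_combination T' * heq + ((P:ℝ) - cfVal u * Q) * hTT'

end S14

/-- Surgery lemma: for `γ = [0; b 1, b 2, ...]` irrational but not a quadratic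
irrationality, with partial quotients in `{1,...,4}`, if the blocks of length `2n+2`
starting at `n₁` and `n₂` coincide (with `n₁ < n₂` of the same parity), then deleting
the block `(b_{n₁}, ..., b_{n₂-1})` or doubling it yields `max(γ¹, γ²) > γ`. -/


theorem stmt14 (n : ℕ) (a : ℕ → ℤ) (h0 : a 0 = 0)
    (ha : ∀ k, 1 ≤ k → 1 ≤ a k ∧ a k ≤ 4)
    (hquad : ∀ qa qb qc : ℚ,
      (qa : ℝ) * (cfVal a) ^ 2 + (qb : ℝ) * cfVal a + (qc : ℝ) = 0 →
        qa = 0 ∧ qb = 0 ∧ qc = 0)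
    (n₁ n₂ : ℕ) (h₁ : 1 ≤ n₁) (h₁₂ : n₁ < n₂) (hpar : n₁ % 2 = n₂ % 2)
    (hrep : ∀ i, i ≤ 2 * n + 1 → a (n₁ + i) = a (n₂ + i)) :
    max (cfVal fun k => if k < n₁ then a k else a (k + (n₂ - n₁)))
        (cfVal fun k => if k < n₂ then a k else a (k - (n₂ - n₁)))
      > cfVal a := by
  have haL : ∀ k, 1 ≤ k → 1 ≤ a k := fun k hk => (ha k hk).1
  have ha1L : ∀ k, 1 ≤ k → 1 ≤ (fun k => if k < n₁ then a k else a (k + (n₂ - n₁))) k := by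
    intro k hk
    dsimp only
    split_ifs with h
    · exact haL k hk
    · exact haL _ (by omega)
  have ha2L : ∀ k, 1 ≤ k → 1 ≤ (fun k => if k < n₂ then a k else a (k - (n₂ - n₁))) k := by
    intro k hk
    dsimp only
    split_ifs with h
    · exact haL k hk
    · exact haL _ (by omega)
  have htail1 : (fun m => (fun k => if k < n₁ then a k else a (k + (n₂ - n₁))) (n₁ + m))
      = (fun m => a (n₂ + m)) := by
    funext m
    dsimp only
    rw [if_neg (by omega)]
    congr 1
    omega
  have htail2 : (fun m => (fun k => if k < n₂ then a k else a (k - (n₂ - n₁))) (n₂ + m))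
      = (fun m => a (n₁ + m)) := by
    funext m
    dsimp only
    rw [if_neg (by omega)]
    congr 1
    omega
  have hagree1 : ∀ k, k < n₁ → a k = (fun k => if k < n₁ then a k else a (k + (n₂ - n₁))) k := by
    intro k hk; dsimp only; rw [if_pos hk]
  have hagree2 : ∀ k, k < n₂ → a k = (fun k => if k < n₂ then a k else a (k - (n₂ - n₁))) k := by
    intro k hk; dsimp only; rw [if_pos hk]
  have hev : Even n₁ ↔ Even n₂ := by
    rw [Nat.even_iff, Nat.even_iff, hpar]
  rw [gt_iff_lt, lt_max_iff]
  rcases lt_trichotomy (cfVal (fun m => a (n₁ + m))) (cfVal (fun m => a (n₂ + m)))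
    with hlt | heq | hgt
  · -- tB < tC
    by_cases hE : Even n₁
    · left
      refine (S14.cmp n₁ a _ haL ha1L hagree1 ?_).1 hE
      rw [htail1]
      exact hlt
    · right
      have hE2 : ¬ Even n₂ := fun h => hE (hev.mpr h)
      refine (S14.cmp n₂ _ a ha2L haL (fun k hk => (hagree2 k hk).symm) ?_).2 hE2
      rw [htail2]
      exact hlt
  · -- equality: contradiction
    exfalso
    -- Möbius data for the block
    have hblk0 : (0:ℤ) ≤ (fun m => a (n₁ + m)) 0 := by
      have := haL n₁ h₁
      simpa using le_trans zero_le_one this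
    obtain ⟨P, P', Q, Q', hdet, hQ, hQ', -, hQ1, hpos, heqB⟩ :=
      S14.moebius (fun m => a (n₁ + m)) hblk0
        (fun k _ => haL (n₁ + k) (by omega)) (n₂ - n₁)
    have hconv : (fun m => a (n₁ + ((n₂ - n₁) + m))) = (fun m => a (n₂ + m)) := by
      funext m; congr 1; omega
    rw [hconv] at heqB hpos
    rw [← heq] at heqB hpos
    have hQ1' : (1:ℤ) ≤ Q := hQ1 (by omega)
    -- Möbius data for the prefix
    obtain ⟨P₀, P₀', Q₀, Q₀', hdet0, hQ0, hQ0', -, -, hpos0, heqP⟩ :=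
      S14.moebius a (by rw [h0]) haL n₁
    set γ := cfVal a with hγ
    set t := cfVal (fun m => a (n₁ + m)) with ht
    -- basic real equations
    have E1 : t * ((Q:ℝ) * t + Q') = (P:ℝ) * t + P' := heqB
    have E0 : γ * ((Q₀:ℝ) * t + Q₀') = (P₀:ℝ) * t + P₀' := heqP
    have htD : t * ((Q₀:ℝ) * γ - P₀) = (P₀':ℝ) - (Q₀':ℝ) * γ := by
      linear_combination E0
    have hq2 : (Q:ℝ) * t^2 + ((Q':ℝ) - P) * t - P' = 0 := by
      linear_combination E1
    have hABC : ((Q*Q₀'^2 - (Q'-P)*Q₀'*Q₀ - P'*Q₀^2 : ℤ) : ℝ) * γ^2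
        + ((-2*Q*P₀'*Q₀' + (Q'-P)*(P₀'*Q₀ + Q₀'*P₀) + 2*P'*Q₀*P₀ : ℤ) : ℝ) * γ
        + ((Q*P₀'^2 - (Q'-P)*P₀'*P₀ - P'*P₀^2 : ℤ) : ℝ) = 0 := by
      push_cast
      linear_combination ((Q₀:ℝ)*γ - P₀)^2 * hq2
        - ((Q:ℝ)*((P₀':ℝ) - (Q₀':ℝ)*γ) + (Q:ℝ)*t*((Q₀:ℝ)*γ - P₀)
            + ((Q':ℝ)-P)*((Q₀:ℝ)*γ - P₀)) * htD
    obtain ⟨hA, hB, hC⟩ := hquad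
      ((Q*Q₀'^2 - (Q'-P)*Q₀'*Q₀ - P'*Q₀^2 : ℤ) : ℚ)
      ((-2*Q*P₀'*Q₀' + (Q'-P)*(P₀'*Q₀ + Q₀'*P₀) + 2*P'*Q₀*P₀ : ℤ) : ℚ)
      ((Q*P₀'^2 - (Q'-P)*P₀'*P₀ - P'*P₀^2 : ℤ) : ℚ)
      (by push_cast; push_cast at hABC; linarith [hABC])
    have hA' : Q*Q₀'^2 - (Q'-P)*Q₀'*Q₀ - P'*Q₀^2 = 0 := by exact_mod_cast hA
    have hB' : -2*Q*P₀'*Q₀' + (Q'-P)*(P₀'*Q₀ + Q₀'*P₀) + 2*P'*Q₀*P₀ = 0 := by exact_mod_cast hB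
    have hC' : Q*P₀'^2 - (Q'-P)*P₀'*P₀ - P'*P₀^2 = 0 := by exact_mod_cast hC
    have hkey : (Q*Q₀'^2 - (Q'-P)*Q₀'*Q₀ - P'*Q₀^2) * P₀^2
        + (-2*Q*P₀'*Q₀' + (Q'-P)*(P₀'*Q₀ + Q₀'*P₀) + 2*P'*Q₀*P₀) * P₀ * Q₀
        + (Q*P₀'^2 - (Q'-P)*P₀'*P₀ - P'*P₀^2) * Q₀^2
        = Q * (P₀*Q₀' - P₀'*Q₀)^2 := by ring
    rw [hA', hB', hC'] at hkey
    rcases hdet0 with h | h <;> rw [h] at hkey <;> simp at hkey <;> omega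
  · -- tC < tB
    by_cases hE : Even n₂
    · right
      refine (S14.cmp n₂ a _ haL ha2L hagree2 ?_).1 hE
      rw [htail2]
      exact hgt
    · left
      have hE1 : ¬ Even n₁ := fun h => hE (hev.mp h)
      refine (S14.cmp n₁ _ a ha1L haL (fun k hk => (hagree1 k hk).symm) ?_).2 hE1
      rw [htail1]
      exact hgt
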